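/- Random walk with varying step size, expected exit time (Lemma C.1, second part): let ε ∈ (0,1), t₀ ∈ (0,1), let (X_j)_{j≥1} be an i.i.d. sequence of random variables each uniformly distributed on [−ε, ε], set t_j = t₀ + X₁ + … + X_j, and let τ = inf{ j ≥ 0 : t_j ∉ (0,1) }. Then E[τ] ≤ 3(t₀ + 4ε)/ε². -/

import Mathlib

open MeasureTheory Set
open scoped ENNReal

open ProbabilityTheory

namespace RWexit

/-- partial-sum path determined by a sequence of increments -/
def path (t₀ : ℝ) (v : ℕ → ℝ) (k : ℕ) : ℝ := t₀ + ∑ i ∈ Finset.range k, v (i + 1)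

/-- "no exit up to time n" -/
def BS (t₀ : ℝ) (n : ℕ) : Set (ℕ → ℝ) := {v | ∀ k ≤ n, path t₀ v k ∈ Set.Ioo (0:ℝ) 1}

/-- the stopped walk -/
noncomputable def TT (t₀ : ℝ) : ℕ → (ℕ → ℝ) → ℝ
  | 0 => fun _ => t₀
  | n+1 => fun v => TT t₀ n v + (BS t₀ n).indicator (fun _ => (1:ℝ)) v * v (n+1)

lemma measurable_path (t₀ : ℝ) (k : ℕ) : Measurable fun v : ℕ → ℝ => path t₀ v k :=
  measurable_const.add (Finset.measurable_sum _ fun i _ => measurable_pi_apply _)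

lemma measurableSet_BS (t₀ : ℝ) (n : ℕ) : MeasurableSet (BS t₀ n) := by
  have h : BS t₀ n = ⋂ k ∈ Finset.range (n+1), (fun v => path t₀ v k) ⁻¹' Set.Ioo 0 1 := by
    ext v; simp [BS, Nat.lt_succ_iff]
  rw [h]
  exact MeasurableSet.biInter (Set.to_countable _) fun k _ =>
    (measurable_path t₀ k) measurableSet_Ioo

lemma measurable_TT (t₀ : ℝ) (n : ℕ) : Measurable (TT t₀ n) := by
  induction n with
  | zero => exact measurable_const
  | succ n ih =>
      exact ih.add ((measurable_const.indicator (measurableSet_BS t₀ n)).mul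
        (measurable_pi_apply _))

lemma path_congr {t₀ : ℝ} {v w : ℕ → ℝ} {n : ℕ} (h : ∀ i ≤ n, v i = w i) {k : ℕ} (hk : k ≤ n) :
    path t₀ v k = path t₀ w k := by
  unfold path
  congr 1
  refine Finset.sum_congr rfl fun i hi => ?_
  exact h _ ((Nat.succ_le_of_lt (Finset.mem_range.mp hi)).trans hk)

lemma BS_congr {t₀ : ℝ} {v w : ℕ → ℝ} {n : ℕ} (h : ∀ i ≤ n, v i = w i) :
    v ∈ BS t₀ n ↔ w ∈ BS t₀ n := by
  unfold BS
  constructor <;> intro hv k hk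
  · rw [← path_congr h hk]; exact hv k hk
  · rw [path_congr h hk]; exact hv k hk

lemma TT_congr {t₀ : ℝ} {n : ℕ} {v w : ℕ → ℝ} (h : ∀ i ≤ n, v i = w i) :
    TT t₀ n v = TT t₀ n w := by
  induction n with
  | zero => rfl
  | succ n ih =>
    have h' : ∀ i ≤ n, v i = w i := fun i hi => h i (hi.trans n.le_succ)
    show TT t₀ n v + _ = TT t₀ n w + _
    rw [ih h', h (n+1) le_rfl]
    congr 1
    by_cases hv : v ∈ BS t₀ n
    · rw [Set.indicator_of_mem hv, Set.indicator_of_mem ((BS_congr h').mp hv)]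
    · rw [Set.indicator_of_notMem hv,
        Set.indicator_of_notMem (fun hw => hv ((BS_congr h').mpr hw))]

lemma indep_comp {Ω' : Type*} [MeasurableSpace Ω'] {P : Measure Ω'}
    {X : ℕ → Ω' → ℝ} (hXmeas : ∀ j, Measurable (X j))
    (hindep : iIndepFun X P)
    (n : ℕ) {Φ : (ℕ → ℝ) → ℝ} (hΦ : Measurable Φ)
    (hΦc : ∀ v w : ℕ → ℝ, (∀ i ≤ n, v i = w i) → Φ v = Φ w) :
    IndepFun (fun ω => Φ fun i => X i ω) (X (n+1)) P := by
  have hST : Disjoint (Finset.range (n+1)) ({n+1} : Finset ℕ) := by simp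
  have h := hindep.indepFun_finset (Finset.range (n+1)) {n+1} hST hXmeas
  set φ : ((Finset.range (n+1) : Finset ℕ) → ℝ) → ℝ := fun v =>
    Φ fun i => if h : i ∈ Finset.range (n+1) then v ⟨i, h⟩ else 0 with hφdef
  have hφm : Measurable φ := by
    apply hΦ.comp
    apply measurable_pi_lambda
    intro i
    by_cases hi : i ∈ Finset.range (n+1)
    · simp only [dif_pos hi]; exact measurable_pi_apply _
    · simp only [dif_neg hi]; exact measurable_const
  set ψ : ((({n+1} : Finset ℕ) : Finset ℕ) → ℝ) → ℝ :=
    fun v => v ⟨n+1, Finset.mem_singleton_self _⟩ with hψdef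
  have hψm : Measurable ψ := measurable_pi_apply _
  have h2 := h.comp hφm hψm
  have e1 : (φ ∘ fun a (i : (Finset.range (n+1) : Finset ℕ)) => X i a)
      = fun ω => Φ fun i => X i ω := by
    funext ω
    refine hΦc _ _ fun i hi => ?_
    simp only [Function.comp, hφdef]
    rw [dif_pos (Finset.mem_range.mpr (Nat.lt_succ_of_le hi))]
  have e2 : (ψ ∘ fun a (i : (({n+1} : Finset ℕ) : Finset ℕ)) => X i a) = X (n+1) := rfl
  rw [e1, e2] at h2
  exact h2

lemma unif_facts {Ω' : Type*} [MeasurableSpace Ω'] {P : Measure Ω'} [IsProbabilityMeasure P]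
    {Y : Ω' → ℝ} (hY : Measurable Y) {ε : ℝ} (hε : 0 < ε)
    (hunif : Measure.map Y P = (ENNReal.ofReal (2 * ε))⁻¹ • volume.restrict (Set.Icc (-ε) ε))
    {g : ℝ → ℝ} (hg : Continuous g) :
    Integrable (fun ω => g (Y ω)) P ∧
      ∫ ω, g (Y ω) ∂P = (2 * ε)⁻¹ * ∫ x in (-ε)..ε, g x := by
  have hle : -ε ≤ ε := by linarith
  have h2ε : (0:ℝ) < 2 * ε := by linarith
  have hc : ((ENNReal.ofReal (2 * ε))⁻¹ : ℝ≥0∞) ≠ ∞ := by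
    simp only [ne_eq, ENNReal.inv_eq_top, ENNReal.ofReal_eq_zero, not_le]
    exact h2ε
  have hint0 : Integrable g (volume.restrict (Set.Icc (-ε) ε)) := hg.integrableOn_Icc
  have hint1 : Integrable g (Measure.map Y P) := by
    rw [hunif]; exact hint0.smul_measure hc
  have hint : Integrable (fun ω => g (Y ω)) P :=
    (integrable_map_measure hg.aestronglyMeasurable hY.aemeasurable).mp hint1
  refine ⟨hint, ?_⟩
  have h1 : ∫ ω, g (Y ω) ∂P = ∫ y, g y ∂(Measure.map Y P) :=
    (integral_map hY.aemeasurable hg.aestronglyMeasurable).symm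
  rw [h1, hunif, integral_smul_measure, ENNReal.toReal_inv,
    ENNReal.toReal_ofReal h2ε.le, smul_eq_mul]
  congr 1
  rw [MeasureTheory.integral_Icc_eq_integral_Ioc, ← intervalIntegral.integral_of_le hle]

lemma unif_mean {Ω' : Type*} [MeasurableSpace Ω'] {P : Measure Ω'} [IsProbabilityMeasure P]
    {Y : Ω' → ℝ} (hY : Measurable Y) {ε : ℝ} (hε : 0 < ε)
    (hunif : Measure.map Y P = (ENNReal.ofReal (2 * ε))⁻¹ • volume.restrict (Set.Icc (-ε) ε)) :
    Integrable Y P ∧ ∫ ω, Y ω ∂P = 0 := by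
  have h := unif_facts hY hε hunif (g := fun x => x) continuous_id
  refine ⟨h.1, ?_⟩
  rw [h.2, integral_id]
  ring

lemma unif_sq {Ω' : Type*} [MeasurableSpace Ω'] {P : Measure Ω'} [IsProbabilityMeasure P]
    {Y : Ω' → ℝ} (hY : Measurable Y) {ε : ℝ} (hε : 0 < ε)
    (hunif : Measure.map Y P = (ENNReal.ofReal (2 * ε))⁻¹ • volume.restrict (Set.Icc (-ε) ε)) :
    Integrable (fun ω => (Y ω) ^ 2) P ∧ ∫ ω, (Y ω) ^ 2 ∂P = ε ^ 2 / 3 := by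
  have h := unif_facts hY hε hunif (g := fun x => x ^ 2) (continuous_pow 2)
  refine ⟨h.1, ?_⟩
  rw [h.2, integral_pow]
  field_simp
  ring

lemma unif_mem_Icc {Ω' : Type*} [MeasurableSpace Ω'] {P : Measure Ω'} [IsProbabilityMeasure P]
    {Y : Ω' → ℝ} (hY : Measurable Y) {ε : ℝ} (hε : 0 < ε)
    (hunif : Measure.map Y P = (ENNReal.ofReal (2 * ε))⁻¹ • volume.restrict (Set.Icc (-ε) ε)) :
    ∀ᵐ ω ∂P, Y ω ∈ Set.Icc (-ε) ε := by
  have h2ε : (0:ℝ) < 2 * ε := by linarith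
  have hmap : Measure.map Y P (Set.Icc (-ε) ε) = 1 := by
    rw [hunif, Measure.smul_apply, Measure.restrict_apply measurableSet_Icc, Set.inter_self,
      Real.volume_Icc, smul_eq_mul]
    rw [show ε - -ε = 2 * ε by ring]
    exact ENNReal.inv_mul_cancel (by simpa using h2ε) ENNReal.ofReal_ne_top
  have hpre : P (Y ⁻¹' Set.Icc (-ε) ε) = 1 := by
    rw [← Measure.map_apply hY measurableSet_Icc, hmap]
  have := (prob_compl_eq_zero_iff (hY measurableSet_Icc)).mpr hpre
  rw [ae_iff]
  convert this using 2
  rfl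

end RWexit

/-- **Random walk with varying step size, expected exit time (Lemma C.1, second part).**
Let `ε ∈ (0,1)`, `t₀ ∈ (0,1)`, `(X_j)_{j ≥ 1}` i.i.d. uniform on `[−ε, ε]`,
`t_j = t₀ + X₁ + ⋯ + X_j` and `τ = inf{ j ≥ 0 : t_j ∉ (0,1) }`. Then
`E[τ] ≤ 3(t₀ + 4ε)/ε²`. -/
theorem random_walk_expected_exit_time
    {Ω' : Type*} [MeasurableSpace Ω'] (P : Measure Ω') [IsProbabilityMeasure P]
    (ε t₀ : ℝ) (hε : ε ∈ Set.Ioo (0 : ℝ) 1) (ht₀ : t₀ ∈ Set.Ioo (0 : ℝ) 1)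
    (X : ℕ → Ω' → ℝ) (hXmeas : ∀ j, Measurable (X j))
    (hindep : ProbabilityTheory.iIndepFun X P)
    (hunif : ∀ j, 1 ≤ j →
      Measure.map (X j) P = (ENNReal.ofReal (2 * ε))⁻¹ • volume.restrict (Set.Icc (-ε) ε))
    (t : ℕ → Ω' → ℝ) (ht : ∀ j ω, t j ω = t₀ + ∑ i ∈ Finset.range j, X (i + 1) ω)
    (τ : Ω' → ℕ) (hτ : ∀ ω, τ ω = sInf {j : ℕ | t j ω ∉ Set.Ioo (0 : ℝ) 1}) :
    ∫⁻ ω, (τ ω : ℝ≥0∞) ∂P ≤ ENNReal.ofReal (3 * (t₀ + 4 * ε) / ε ^ 2) := by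
  obtain ⟨hε0, hε1⟩ := hε
  obtain ⟨ht₀0, ht₀1⟩ := ht₀
  have hεsq : (0:ℝ) < ε ^ 2 := by positivity
  set XX : Ω' → (ℕ → ℝ) := fun ω i => X i ω with hXXdef
  have hXXm : Measurable XX := measurable_pi_lambda _ fun i => hXmeas i
  set T : ℕ → Ω' → ℝ := fun n ω => RWexit.TT t₀ n (XX ω) with hTdef
  set Bv : ℕ → Set Ω' := fun n => XX ⁻¹' RWexit.BS t₀ n with hBdef
  have hBmeas : ∀ n, MeasurableSet (Bv n) := fun n => hXXm (RWexit.measurableSet_BS t₀ n)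
  have htpath : ∀ k ω, t k ω = RWexit.path t₀ (XX ω) k := fun k ω => ht k ω
  have hmemB : ∀ n ω, ω ∈ Bv n ↔ ∀ k ≤ n, t k ω ∈ Set.Ioo (0:ℝ) 1 := by
    intro n ω
    constructor <;> intro h k hk
    · rw [htpath]; exact h k hk
    · rw [← htpath k ω]; exact h k hk
  have hind : ∀ n ω, (RWexit.BS t₀ n).indicator (fun _ => (1:ℝ)) (XX ω)
      = (Bv n).indicator (fun _ => (1:ℝ)) ω := by
    intro n ω
    by_cases h : XX ω ∈ RWexit.BS t₀ n
    · rw [Set.indicator_of_mem h, Set.indicator_of_mem (show ω ∈ Bv n from h)]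
    · rw [Set.indicator_of_notMem h, Set.indicator_of_notMem (show ω ∉ Bv n from h)]
  have hTrec : ∀ n ω, T (n+1) ω = T n ω + (Bv n).indicator (fun _ => (1:ℝ)) ω * X (n+1) ω := by
    intro n ω
    show RWexit.TT t₀ (n+1) (XX ω) = _
    rw [show RWexit.TT t₀ (n+1) (XX ω) = RWexit.TT t₀ n (XX ω)
      + (RWexit.BS t₀ n).indicator (fun _ => (1:ℝ)) (XX ω) * XX ω (n+1) from rfl, hind]
  have hXint : ∀ n : ℕ, Integrable (X (n+1)) P := fun n =>
    (RWexit.unif_mean (hXmeas _) hε0 (hunif _ n.succ_pos)).1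
  have hXmean : ∀ n : ℕ, ∫ ω, X (n+1) ω ∂P = 0 := fun n =>
    (RWexit.unif_mean (hXmeas _) hε0 (hunif _ n.succ_pos)).2
  have hXsqint : ∀ n : ℕ, Integrable (fun ω => (X (n+1) ω) ^ 2) P := fun n =>
    (RWexit.unif_sq (hXmeas _) hε0 (hunif _ n.succ_pos)).1
  have hXsqmean : ∀ n : ℕ, ∫ ω, (X (n+1) ω) ^ 2 ∂P = ε ^ 2 / 3 := fun n =>
    (RWexit.unif_sq (hXmeas _) hε0 (hunif _ n.succ_pos)).2
  have hXIcc : ∀ n : ℕ, ∀ᵐ ω ∂P, X (n+1) ω ∈ Set.Icc (-ε) ε := fun n =>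
    RWexit.unif_mem_Icc (hXmeas _) hε0 (hunif _ n.succ_pos)
  have hTm : ∀ n, Measurable (T n) := fun n => (RWexit.measurable_TT t₀ n).comp hXXm
  have hInInt : ∀ n, Integrable ((Bv n).indicator (fun _ => (1:ℝ))) P := fun n =>
    (integrable_const (1:ℝ)).indicator (hBmeas n)
  have hInMean : ∀ n, ∫ ω, (Bv n).indicator (fun _ => (1:ℝ)) ω ∂P = (P (Bv n)).toReal := by
    intro n
    rw [integral_indicator_const (1:ℝ) (hBmeas n), smul_eq_mul, mul_one]
    rfl
  have hIndIn : ∀ n, IndepFun ((Bv n).indicator (fun _ => (1:ℝ))) (X (n+1)) P := by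
    intro n
    have hc : ∀ v w : ℕ → ℝ, (∀ i ≤ n, v i = w i) →
        (RWexit.BS t₀ n).indicator (fun _ => (1:ℝ)) v
          = (RWexit.BS t₀ n).indicator (fun _ => (1:ℝ)) w := by
      intro v w hvw
      by_cases hv : v ∈ RWexit.BS t₀ n
      · rw [Set.indicator_of_mem hv, Set.indicator_of_mem ((RWexit.BS_congr hvw).mp hv)]
      · rw [Set.indicator_of_notMem hv,
          Set.indicator_of_notMem (fun hw => hv ((RWexit.BS_congr hvw).mpr hw))]
    have h := RWexit.indep_comp hXmeas hindep n
      (measurable_const.indicator (RWexit.measurableSet_BS t₀ n)) hc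
    have e : (fun ω => (RWexit.BS t₀ n).indicator (fun _ => (1:ℝ)) fun i => X i ω)
        = (Bv n).indicator (fun _ => (1:ℝ)) := by
      funext ω; exact hind n ω
    rwa [e] at h
  have hIndTIn : ∀ n, IndepFun (fun ω => T n ω * (Bv n).indicator (fun _ => (1:ℝ)) ω)
      (X (n+1)) P := by
    intro n
    have hc : ∀ v w : ℕ → ℝ, (∀ i ≤ n, v i = w i) →
        RWexit.TT t₀ n v * (RWexit.BS t₀ n).indicator (fun _ => (1:ℝ)) v
          = RWexit.TT t₀ n w * (RWexit.BS t₀ n).indicator (fun _ => (1:ℝ)) w := by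
      intro v w hvw
      rw [RWexit.TT_congr hvw]
      congr 1
      by_cases hv : v ∈ RWexit.BS t₀ n
      · rw [Set.indicator_of_mem hv, Set.indicator_of_mem ((RWexit.BS_congr hvw).mp hv)]
      · rw [Set.indicator_of_notMem hv,
          Set.indicator_of_notMem (fun hw => hv ((RWexit.BS_congr hvw).mpr hw))]
    have h := RWexit.indep_comp hXmeas hindep n
      ((RWexit.measurable_TT t₀ n).mul
        (measurable_const.indicator (RWexit.measurableSet_BS t₀ n))) hc
    have e : (fun ω => RWexit.TT t₀ n (fun i => X i ω)
          * (RWexit.BS t₀ n).indicator (fun _ => (1:ℝ)) fun i => X i ω)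
        = fun ω => T n ω * (Bv n).indicator (fun _ => (1:ℝ)) ω := by
      funext ω
      rw [show (fun i => X i ω) = XX ω from rfl, hind n ω]
    rw [← e]; exact h
  have hkey : ∀ n, Integrable (T n) P ∧ Integrable (fun ω => (T n ω) ^ 2) P ∧
      ∫ ω, T n ω ∂P = t₀ ∧
      ∫ ω, (T n ω) ^ 2 ∂P = t₀ ^ 2 + ε ^ 2 / 3 * ∑ k ∈ Finset.range n, (P (Bv k)).toReal := by
    intro n
    induction n with
    | zero =>
      have h0 : T 0 = fun _ => t₀ := rfl
      refine ⟨by rw [h0]; exact integrable_const t₀, by rw [h0]; exact integrable_const _, ?_, ?_⟩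
      · rw [h0]; simp
      · rw [h0]; simp [measure_univ]
    | succ n ih =>
      obtain ⟨hTint, hTsqint, hTmean, hTsqmean⟩ := ih
      set In := (Bv n).indicator (fun _ => (1:ℝ)) with hIndef
      have hInm : Measurable In := measurable_const.indicator (hBmeas n)
      have hInsq : ∀ ω, In ω ^ 2 = In ω := by
        intro ω
        by_cases h : ω ∈ Bv n <;> simp [hIndef, Set.indicator, h]
      have hWint : Integrable (fun ω => In ω * X (n+1) ω) P :=
        (hIndIn n).integrable_mul (hInInt n) (hXint n)
      have hTInint : Integrable (fun ω => T n ω * In ω) P := by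
        have hb := hTint.bdd_mul hInm.aestronglyMeasurable (c := 1) (Filter.Eventually.of_forall fun ω => by
          by_cases h : ω ∈ Bv n <;> simp [hIndef, Set.indicator, h])
        exact hb.congr (Filter.Eventually.of_forall fun ω => mul_comm _ _)
      have hTWint : Integrable (fun ω => (T n ω * In ω) * X (n+1) ω) P :=
        (hIndTIn n).integrable_mul hTInint (hXint n)
      have hIndInX2 : IndepFun In (fun ω => (X (n+1) ω) ^ 2) P :=
        (hIndIn n).comp measurable_id (measurable_id.pow_const 2)
      have hInX2int : Integrable (fun ω => In ω * (X (n+1) ω) ^ 2) P :=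
        hIndInX2.integrable_mul (hInInt n) (hXsqint n)
      have hTsucc : T (n+1) = fun ω => T n ω + In ω * X (n+1) ω := by
        funext ω; exact hTrec n ω
      have hTsuccint : Integrable (T (n+1)) P := by
        rw [hTsucc]; exact hTint.add hWint
      have hTsuccsq : (fun ω => (T (n+1) ω) ^ 2)
          = fun ω => (T n ω) ^ 2 + (2 * ((T n ω * In ω) * X (n+1) ω)
            + In ω * (X (n+1) ω) ^ 2) := by
        funext ω
        rw [hTsucc]
        have hexp : (T n ω + In ω * X (n+1) ω) ^ 2 = (T n ω) ^ 2
            + (2 * ((T n ω * In ω) * X (n+1) ω) + In ω ^ 2 * (X (n+1) ω) ^ 2) := by ring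
        rw [hexp, hInsq ω]
      have hTsuccsqint : Integrable (fun ω => (T (n+1) ω) ^ 2) P := by
        rw [hTsuccsq]
        exact hTsqint.add ((hTWint.const_mul 2).add hInX2int)
      have hWmean : ∫ ω, In ω * X (n+1) ω ∂P = 0 := by
        have h := IndepFun.integral_mul_eq_mul_integral (hIndIn n) (hInInt n).aestronglyMeasurable (hXint n).aestronglyMeasurable
        have e : (In * X (n+1)) = fun ω => In ω * X (n+1) ω := rfl
        rw [e] at h
        rw [h, hXmean n, mul_zero]
      have hTWmean : ∫ ω, (T n ω * In ω) * X (n+1) ω ∂P = 0 := by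
        have h := IndepFun.integral_mul_eq_mul_integral (hIndTIn n) hTInint.aestronglyMeasurable (hXint n).aestronglyMeasurable
        have e : ((fun ω => T n ω * In ω) * X (n+1)) = fun ω => (T n ω * In ω) * X (n+1) ω := rfl
        rw [e] at h
        rw [h, hXmean n, mul_zero]
      have hInX2mean : ∫ ω, In ω * (X (n+1) ω) ^ 2 ∂P = (P (Bv n)).toReal * (ε ^ 2 / 3) := by
        have h := IndepFun.integral_mul_eq_mul_integral hIndInX2 (hInInt n).aestronglyMeasurable (hXsqint n).aestronglyMeasurable
        have e : (In * fun ω => (X (n+1) ω) ^ 2) = fun ω => In ω * (X (n+1) ω) ^ 2 := rfl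
        rw [e] at h
        rw [h, hXsqmean n, hInMean n]
      refine ⟨hTsuccint, hTsuccsqint, ?_, ?_⟩
      · have e : ∫ ω, T (n+1) ω ∂P = ∫ ω, (T n ω + In ω * X (n+1) ω) ∂P :=
          integral_congr_ae (Filter.Eventually.of_forall fun ω => hTrec n ω)
        rw [e, integral_add hTint hWint, hTmean, hWmean, add_zero]
      · have e : ∫ ω, (T (n+1) ω) ^ 2 ∂P = ∫ ω, ((T n ω) ^ 2
            + (2 * ((T n ω * In ω) * X (n+1) ω) + In ω * (X (n+1) ω) ^ 2)) ∂P :=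
          integral_congr_ae (Filter.Eventually.of_forall fun ω => congrFun hTsuccsq ω)
        have hadd : Integrable (fun ω => 2 * ((T n ω * In ω) * X (n+1) ω)
            + In ω * (X (n+1) ω) ^ 2) P := (hTWint.const_mul 2).add hInX2int
        rw [e, integral_add hTsqint hadd,
          integral_add (hTWint.const_mul 2) hInX2int, integral_const_mul, hTWmean,
          hInX2mean, hTsqmean, Finset.sum_range_succ]
        ring
  set G : Set Ω' := {ω | ∀ j : ℕ, X (j+1) ω ∈ Set.Icc (-ε) ε} with hGdef
  have hG : ∀ᵐ ω ∂P, ω ∈ G := by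
    rw [hGdef, ae_iff]
    have e : {ω | ¬ ∀ j : ℕ, X (j+1) ω ∈ Set.Icc (-ε) ε}
        = ⋃ j : ℕ, {ω | ¬ X (j+1) ω ∈ Set.Icc (-ε) ε} := by
      ext ω; simp
    rw [show {a | ¬a ∈ {ω | ∀ (j : ℕ), X (j + 1) ω ∈ Set.Icc (-ε) ε}}
      = {ω | ¬ ∀ j : ℕ, X (j+1) ω ∈ Set.Icc (-ε) ε} from rfl, e]
    refine measure_iUnion_null fun j => ?_
    have h := hXIcc j
    rw [ae_iff] at h
    exact h
  have hclaim : ∀ ω ∈ G, ∀ n, T n ω ∈ Set.Icc (-ε) (1+ε)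
      ∧ ((∀ k < n, t k ω ∈ Set.Ioo (0:ℝ) 1) → T n ω = t n ω) := by
    intro ω hω n
    induction n with
    | zero =>
      have h0 : T 0 ω = t₀ := rfl
      refine ⟨⟨by rw [h0]; linarith, by rw [h0]; linarith⟩, fun _ => ?_⟩
      rw [h0, ht 0 ω]
      simp
    | succ n ihn =>
      by_cases hBn : ω ∈ Bv n
      · have hIoo : ∀ k ≤ n, t k ω ∈ Set.Ioo (0:ℝ) 1 := (hmemB n ω).mp hBn
        have hTn : T n ω = t n ω := ihn.2 fun k hk => hIoo k hk.le
        have ht1 : t (n+1) ω = t n ω + X (n+1) ω := by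
          rw [ht (n+1) ω, ht n ω, Finset.sum_range_succ]
          ring
        have heq : T (n+1) ω = t (n+1) ω := by
          rw [hTrec n ω, Set.indicator_of_mem hBn, hTn, ht1]
          simp
        obtain ⟨h1, h2⟩ := hIoo n le_rfl
        obtain ⟨h3, h4⟩ := hω n
        refine ⟨?_, fun _ => heq⟩
        rw [heq, ht1]
        exact ⟨by linarith, by linarith⟩
      · have heq : T (n+1) ω = T n ω := by
          rw [hTrec n ω, Set.indicator_of_notMem hBn, zero_mul, add_zero]
        refine ⟨by rw [heq]; exact ihn.1, fun hall => ?_⟩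
        exact absurd ((hmemB n ω).mpr fun k hk => hall k (Nat.lt_succ_of_le hk)) hBn
  have hptw : ∀ n, ∀ᵐ ω ∂P, (T n ω) ^ 2 ≤ (1+ε) * T n ω + 3 * ε := by
    intro n
    filter_upwards [hG] with ω hω
    obtain ⟨h1, h2⟩ := (hclaim ω hω n).1
    nlinarith
  have hSb : ∀ n, ∑ k ∈ Finset.range n, (P (Bv k)).toReal ≤ 3 * (t₀ + 4 * ε) / ε ^ 2 := by
    intro n
    obtain ⟨hTint, hTsqint, hTmean, hTsqmean⟩ := hkey n
    have hrhs : Integrable (fun ω => (1+ε) * T n ω + 3 * ε) P :=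
      (hTint.const_mul (1+ε)).add (integrable_const _)
    have hle := integral_mono_ae hTsqint hrhs (hptw n)
    rw [hTsqmean, integral_add (hTint.const_mul (1+ε)) (integrable_const _),
      integral_const_mul, hTmean, integral_const, probReal_univ] at hle
    simp only [ENNReal.toReal_one, smul_eq_mul, one_mul] at hle
    have h2 : ε ^ 2 / 3 * (∑ k ∈ Finset.range n, (P (Bv k)).toReal) ≤ t₀ + 4 * ε := by
      nlinarith [mul_le_of_le_one_right hε0.le ht₀1.le, sq_nonneg t₀]
    rw [le_div_iff₀ hεsq]
    nlinarith
  have htm : ∀ k, Measurable (t k) := by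
    intro k
    have e : t k = fun ω => t₀ + ∑ i ∈ Finset.range k, X (i+1) ω := funext fun ω => ht k ω
    rw [e]
    exact measurable_const.add (Finset.measurable_sum _ fun i _ => hXmeas _)
  have hτset : ∀ j : ℕ, {ω | j < τ ω} = (⋃ k : ℕ, {ω | t k ω ∉ Set.Ioo (0:ℝ) 1})
      ∩ ⋂ k : ℕ, ⋂ _ : k ≤ j, {ω | t k ω ∈ Set.Ioo (0:ℝ) 1} := by
    intro j
    ext ω
    simp only [Set.mem_setOf_eq, Set.mem_inter_iff, Set.mem_iUnion, Set.mem_iInter]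
    rw [hτ ω]
    constructor
    · intro h
      have hne : {j : ℕ | t j ω ∉ Set.Ioo (0:ℝ) 1}.Nonempty := by
        by_contra h'
        rw [Set.not_nonempty_iff_eq_empty] at h'
        rw [h', Nat.sInf_empty] at h
        omega
      obtain ⟨k₀, hk₀⟩ := hne
      refine ⟨⟨k₀, hk₀⟩, fun k hk => ?_⟩
      by_contra hk'
      have := Nat.sInf_le (show k ∈ {j : ℕ | t j ω ∉ Set.Ioo (0:ℝ) 1} from hk')
      omega
    · rintro ⟨⟨k₀, hk₀⟩, hall⟩
      have hmem := Nat.sInf_mem (⟨k₀, hk₀⟩ :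
        Set.Nonempty {j : ℕ | t j ω ∉ Set.Ioo (0:ℝ) 1})
      by_contra h
      push_neg at h
      exact hmem (hall _ h)
  have hτmeas : ∀ j, MeasurableSet {ω | j < τ ω} := by
    intro j
    rw [hτset j]
    exact (MeasurableSet.iUnion fun k => ((htm k) measurableSet_Ioo).compl).inter
      (MeasurableSet.iInter fun k => MeasurableSet.iInter fun _ =>
        (htm k) measurableSet_Ioo)
  have hsub : ∀ j, {ω | j < τ ω} ⊆ Bv j := by
    intro j ω hω
    simp only [Set.mem_setOf_eq] at hω
    rw [hτ ω] at hω
    refine (hmemB j ω).mpr fun k hk => ?_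
    by_contra hk'
    have := Nat.sInf_le (show k ∈ {j : ℕ | t j ω ∉ Set.Ioo (0:ℝ) 1} from hk')
    omega
  have hcount : ∀ ω, (τ ω : ℝ≥0∞)
      = ∑' j : ℕ, Set.indicator {ω' | j < τ ω'} (fun _ => (1:ℝ≥0∞)) ω := by
    intro ω
    have h1 : ∀ j, Set.indicator {ω' | j < τ ω'} (fun _ => (1:ℝ≥0∞)) ω
        = if j < τ ω then 1 else 0 := by
      intro j
      by_cases h : j < τ ω <;> simp [Set.indicator, h]
    simp_rw [h1]
    rw [tsum_eq_sum (s := Finset.range (τ ω)) (fun j hj => if_neg (by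
      simp only [Finset.mem_range, not_lt] at hj; omega))]
    rw [Finset.sum_congr rfl fun j hj => if_pos (Finset.mem_range.mp hj)]
    simp
  calc ∫⁻ ω, (τ ω : ℝ≥0∞) ∂P
      = ∑' j : ℕ, P {ω | j < τ ω} := by
        rw [show (fun ω => (τ ω : ℝ≥0∞))
          = fun ω => ∑' j : ℕ, Set.indicator {ω' | j < τ ω'} (fun _ => (1:ℝ≥0∞)) ω
          from funext hcount]
        rw [lintegral_tsum fun j => (measurable_const.indicator (hτmeas j)).aemeasurable]
        congr 1
        funext j
        rw [lintegral_indicator_const (hτmeas j) 1, one_mul]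
    _ ≤ ∑' j : ℕ, P (Bv j) := ENNReal.tsum_le_tsum fun j => measure_mono (hsub j)
    _ ≤ ENNReal.ofReal (3 * (t₀ + 4 * ε) / ε ^ 2) := by
        rw [ENNReal.tsum_eq_iSup_sum' (fun n => Finset.range n) Finset.exists_nat_subset_range]
        refine iSup_le fun n => ?_
        have e : ∑ j ∈ Finset.range n, P (Bv j)
            = ENNReal.ofReal (∑ j ∈ Finset.range n, (P (Bv j)).toReal) := by
          rw [ENNReal.ofReal_sum_of_nonneg (fun j _ => ENNReal.toReal_nonneg)]
          exact Finset.sum_congr rfl fun j _ => (ENNReal.ofReal_toReal (measure_ne_top P _)).symm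
        rw [e]
        exact ENNReal.ofReal_le_ofReal (hSb n)
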